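/- Let m ≥ 1, L > 0 and B > 0, let f : ℝ^m → ℝ be differentiable with L-Lipschitz gradient on the nonnegative orthant ℝ^m_+, and let λ* ∈ ℝ^m_+ satisfy f(λ*) ≤ f(μ) for all μ ∈ ℝ^m_+. Then for every λ ∈ ℝ^m_+ with ‖λ‖₁ ≤ B, ⟨λ, ∇f(λ)⟩ ≤ B·√(2·m·L·(f(λ) − f(λ*))) + 2·(f(λ) − f(λ*)). -/

import Mathlib

open InnerProductSpace

lemma my_descent {F : Type*} [NormedAddCommGroup F] [InnerProductSpace ℝ F] [CompleteSpace F]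
    {f : F → ℝ} (hf : Differentiable ℝ f) {L : ℝ} (hL : 0 < L)
    {s : Set F} (hs : Convex ℝ s)
    (hlip : ∀ x ∈ s, ∀ y ∈ s, ‖gradient f x - gradient f y‖ ≤ L * ‖x - y‖)
    {x y : F} (hx : x ∈ s) (hy : y ∈ s) :
    f y ≤ f x + ⟪gradient f x, y - x⟫_ℝ + L / 2 * ‖y - x‖ ^ 2 := by
  set d := y - x with hd
  set φ : ℝ → ℝ := fun t => f (x + t • d) - t * ⟪gradient f x, d⟫_ℝ - L / 2 * t ^ 2 * ‖d‖ ^ 2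
    with hφ
  have hline : ∀ t : ℝ, HasDerivAt (fun t : ℝ => x + t • d) d t := by
    intro t
    simpa using ((hasDerivAt_id t).smul_const d).const_add x
  have hmem : ∀ t ∈ Set.Icc (0:ℝ) 1, x + t • d ∈ s := by
    intro t ht
    have : x + t • d = (1 - t) • x + t • y := by
      rw [hd]; module
    rw [this]
    exact hs hx hy (by linarith [ht.2]) ht.1 (by ring)
  have hderiv : ∀ t : ℝ, HasDerivAt φ
      (⟪gradient f (x + t • d), d⟫_ℝ - ⟪gradient f x, d⟫_ℝ - L / 2 * (2 * t) * ‖d‖ ^ 2) t := by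
    intro t
    have h1 : HasDerivAt (fun t : ℝ => f (x + t • d)) (⟪gradient f (x + t • d), d⟫_ℝ) t := by
      have := ((hf (x + t • d)).hasGradientAt.hasFDerivAt).comp_hasDerivAt t (hline t)
      simpa [toDual_apply_apply, Function.comp_def] using this
    have h2 : HasDerivAt (fun t : ℝ => t * ⟪gradient f x, d⟫_ℝ) (⟪gradient f x, d⟫_ℝ) t := by
      simpa using (hasDerivAt_id t).mul_const _
    have h3 : HasDerivAt (fun t : ℝ => L / 2 * t ^ 2 * ‖d‖ ^ 2) (L / 2 * (2 * t) * ‖d‖ ^ 2) t := by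
      have := ((hasDerivAt_pow 2 t).const_mul (L / 2)).mul_const (‖d‖ ^ 2)
      simpa [mul_comm, mul_assoc, mul_left_comm] using this
    exact (h1.sub h2).sub h3
  have hanti : AntitoneOn φ (Set.Icc (0:ℝ) 1) := by
    apply antitoneOn_of_deriv_nonpos (convex_Icc 0 1)
    · exact Continuous.continuousOn (by
        exact continuous_iff_continuousAt.2 fun t => (hderiv t).continuousAt)
    · intro t _
      exact (hderiv t).differentiableAt.differentiableWithinAt
    · intro t ht
      rw [interior_Icc] at ht
      rw [(hderiv t).deriv]
      have hm : x + t • d ∈ s := hmem t ⟨le_of_lt ht.1, le_of_lt ht.2⟩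
      have h1 : ⟪gradient f (x + t • d), d⟫_ℝ - ⟪gradient f x, d⟫_ℝ
          = ⟪gradient f (x + t • d) - gradient f x, d⟫_ℝ := by
        rw [inner_sub_left]
      have h2 : ⟪gradient f (x + t • d) - gradient f x, d⟫_ℝ ≤ L * t * ‖d‖ ^ 2 := by
        calc ⟪gradient f (x + t • d) - gradient f x, d⟫_ℝ
            ≤ ‖gradient f (x + t • d) - gradient f x‖ * ‖d‖ := real_inner_le_norm _ _
          _ ≤ (L * ‖(x + t • d) - x‖) * ‖d‖ := by
              gcongr
              exact hlip _ hm _ hx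
          _ = L * t * ‖d‖ ^ 2 := by
              rw [add_sub_cancel_left, norm_smul]
              simp [Real.norm_eq_abs, abs_of_pos ht.1]
              ring
      rw [h1]
      nlinarith [h2]
  have h01 := hanti (Set.left_mem_Icc.2 one_pos.le) (Set.right_mem_Icc.2 one_pos.le) one_pos.le
  have hφ0 : φ 0 = f x := by simp [hφ]
  have hφ1 : φ 1 = f y - ⟪gradient f x, d⟫_ℝ - L / 2 * ‖d‖ ^ 2 := by
    simp [hφ, hd]
  rw [hφ0, hφ1] at h01
  linarith

set_option maxHeartbeats 1000000 in
theorem stmt_6 (m : ℕ) (hm : 1 ≤ m) (L : ℝ) (hL : 0 < L) (B : ℝ) (hB : 0 < B)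
    (f : EuclideanSpace ℝ (Fin m) → ℝ) (hf : Differentiable ℝ f)
    (hlip : ∀ x : EuclideanSpace ℝ (Fin m), (∀ i, 0 ≤ x i) →
      ∀ y : EuclideanSpace ℝ (Fin m), (∀ i, 0 ≤ y i) →
      ‖gradient f x - gradient f y‖ ≤ L * ‖x - y‖)
    (lstar : EuclideanSpace ℝ (Fin m)) (hstar : ∀ i, 0 ≤ lstar i)
    (hmin : ∀ μ : EuclideanSpace ℝ (Fin m), (∀ i, 0 ≤ μ i) → f lstar ≤ f μ)
    (lam : EuclideanSpace ℝ (Fin m)) (hlam : ∀ i, 0 ≤ lam i)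
    (hlamB : ∑ i, |lam i| ≤ B) :
    ∑ i, lam i * gradient f lam i ≤
      B * Real.sqrt (2 * m * L * (f lam - f lstar)) + 2 * (f lam - f lstar) := by
  set g := gradient f lam with hg
  set Δ := f lam - f lstar with hΔdef
  have hΔ : 0 ≤ Δ := by
    have := hmin lam hlam
    linarith
  set S : Set (EuclideanSpace ℝ (Fin m)) := {x | ∀ i, 0 ≤ x i} with hS
  have hconv : Convex ℝ S := by
    intro x hx y hy a b ha hb _
    intro i
    have : (a • x + b • y) i = a * x i + b * y i := rfl
    rw [this]
    exact add_nonneg (mul_nonneg ha (hx i)) (mul_nonneg hb (hy i))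
  set s : EuclideanSpace ℝ (Fin m) := WithLp.toLp 2 (fun i => min (lam i) (max (g i) 0 / L)) with hs
  have hs_apply : ∀ i, s i = min (lam i) (max (g i) 0 / L) := fun i => rfl
  have hs_nonneg : ∀ i, 0 ≤ s i := fun i =>
    le_min (hlam i) (div_nonneg (le_max_right _ _) hL.le)
  have hs_le : ∀ i, s i ≤ lam i := fun i => min_le_left _ _
  have hLs : ∀ i, L * s i ≤ max (g i) 0 := by
    intro i
    have h1 : s i ≤ max (g i) 0 / L := min_le_right _ _
    calc L * s i ≤ L * (max (g i) 0 / L) := mul_le_mul_of_nonneg_left h1 hL.le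
      _ = max (g i) 0 := by field_simp
  have hsg : ∀ i, s i * max (g i) 0 = s i * g i := by
    intro i
    rcases le_or_gt 0 (g i) with h | h
    · rw [max_eq_left h]
    · have : s i = 0 := by
        rw [hs_apply i, max_eq_right h.le, zero_div, min_eq_right (hlam i)]
      rw [this]; ring
  have hsg_nonneg : ∀ i, 0 ≤ s i * g i := by
    intro i
    rw [← hsg i]
    exact mul_nonneg (hs_nonneg i) (le_max_right _ _)
  set μ : EuclideanSpace ℝ (Fin m) := lam - s with hμdef
  have hμ : ∀ i, 0 ≤ μ i := by
    intro i
    have : μ i = lam i - s i := rfl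
    rw [this]
    linarith [hs_le i]
  have hdesc := my_descent hf hL hconv
    (fun x hx y hy => hlip x hx y hy) (Set.mem_setOf.2 hlam) (Set.mem_setOf.2 hμ)
  have hsub : μ - lam = -s := by rw [hμdef]; abel
  have hinner : ⟪g, μ - lam⟫_ℝ = -∑ i, s i * g i := by
    rw [hsub, inner_neg_right, PiLp.inner_apply]
    simp [mul_comm]
  have hnorm : ‖μ - lam‖ ^ 2 = ∑ i, s i * s i := by
    rw [hsub, norm_neg, ← real_inner_self_eq_norm_sq, PiLp.inner_apply]
    simp [sq]
  have hmain : f lstar ≤ f lam - ∑ i, s i * g i + L / 2 * ∑ i, s i * s i := by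
    have := hmin μ hμ
    rw [hinner, hnorm] at hdesc
    linarith
  have hterm : ∀ i ∈ Finset.univ, L / 2 * (s i * s i) ≤ 1 / 2 * (s i * g i) := by
    intro i _
    have h1 := hLs i
    have h2 := hs_nonneg i
    have h3 := hsg i
    nlinarith
  have hkey : ∑ i, s i * g i ≤ 2 * Δ := by
    have hsum : ∑ i, L / 2 * (s i * s i) ≤ ∑ i, 1 / 2 * (s i * g i) :=
      Finset.sum_le_sum hterm
    have e1 : L / 2 * ∑ i, s i * s i = ∑ i, L / 2 * (s i * s i) := Finset.mul_sum _ _ _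
    have e2 : ∑ i, (1:ℝ) / 2 * (s i * g i) = 1 / 2 * ∑ i, s i * g i :=
      (Finset.mul_sum _ _ _).symm
    rw [e1] at hmain
    rw [e2] at hsum
    linarith
  have hsqrt_nonneg : 0 ≤ Real.sqrt (2 * L * Δ) := Real.sqrt_nonneg _
  have hib : ∀ i ∈ Finset.univ, lam i * g i ≤ lam i * Real.sqrt (2 * L * Δ) + s i * g i := by
    intro i _
    rcases le_or_gt (g i) 0 with h | h
    · have h1 : lam i * g i ≤ 0 := mul_nonpos_of_nonneg_of_nonpos (hlam i) h
      have h2 : 0 ≤ lam i * Real.sqrt (2 * L * Δ) := mul_nonneg (hlam i) hsqrt_nonneg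
      linarith [hsg_nonneg i]
    · rcases le_or_gt (lam i) (g i / L) with h' | h'
      · have : s i = lam i := by
          rw [hs_apply i, max_eq_left h.le, min_eq_left h']
        rw [this]
        have : 0 ≤ lam i * Real.sqrt (2 * L * Δ) := mul_nonneg (hlam i) hsqrt_nonneg
        linarith
      · have hsi : s i = g i / L := by
          rw [hs_apply i, max_eq_left h.le, min_eq_right h'.le]
        have hsingle : s i * g i ≤ ∑ j, s j * g j :=
          Finset.single_le_sum (fun j _ => hsg_nonneg j) (Finset.mem_univ i)
        have hgi2 : g i ^ 2 ≤ 2 * L * Δ := by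
          rw [hsi] at hsingle
          have : g i / L * g i = g i ^ 2 / L := by ring
          rw [this] at hsingle
          have := hkey
          rw [div_le_iff₀ hL] at *
          nlinarith
        have hgi : g i ≤ Real.sqrt (2 * L * Δ) := by
          rw [show g i = Real.sqrt (g i ^ 2) from (Real.sqrt_sq h.le).symm]
          exact Real.sqrt_le_sqrt hgi2
        have : lam i * g i ≤ lam i * Real.sqrt (2 * L * Δ) := by
          gcongr
          exact hlam i
        linarith [hsg_nonneg i]
  have hsum1 : ∑ i, lam i * g i ≤ (∑ i, lam i) * Real.sqrt (2 * L * Δ) + 2 * Δ := by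
    calc ∑ i, lam i * g i ≤ ∑ i, (lam i * Real.sqrt (2 * L * Δ) + s i * g i) :=
          Finset.sum_le_sum hib
      _ = (∑ i, lam i) * Real.sqrt (2 * L * Δ) + ∑ i, s i * g i := by
          rw [Finset.sum_add_distrib, ← Finset.sum_mul]
      _ ≤ (∑ i, lam i) * Real.sqrt (2 * L * Δ) + 2 * Δ := by linarith [hkey]
  have hlamsum : ∑ i, lam i ≤ B := by
    calc ∑ i, lam i = ∑ i, |lam i| := by
          apply Finset.sum_congr rfl
          intro i _
          exact (abs_of_nonneg (hlam i)).symm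
      _ ≤ B := hlamB
  have hsqle : Real.sqrt (2 * L * Δ) ≤ Real.sqrt (2 * m * L * Δ) := by
    apply Real.sqrt_le_sqrt
    have hm1 : (1:ℝ) ≤ (m:ℝ) := by exact_mod_cast hm
    nlinarith [mul_nonneg (mul_nonneg (sub_nonneg.2 hm1) hL.le) hΔ]
  have hstep1 : (∑ i, lam i) * Real.sqrt (2 * L * Δ) ≤ B * Real.sqrt (2 * L * Δ) :=
    mul_le_mul_of_nonneg_right hlamsum hsqrt_nonneg
  have hstep2 : B * Real.sqrt (2 * L * Δ) ≤ B * Real.sqrt (2 * ↑m * L * Δ) :=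
    mul_le_mul_of_nonneg_left hsqle hB.le
  linarith
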